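/- Let p < q be two distinct primes and let n = p^{e_1}·q^{e_2} with e_1, e_2 ≥ 1. Let f(x) ∈ ℚ[x] with deg f(x) < n be divisible by Φ_n(x). Suppose (h_{n/p}(x), h_{n/q}(x)) and (h'_{n/p}(x), h'_{n/q}(x)) are two pairs of polynomials in ℚ[x] with deg h_{n/p} < n/p, deg h'_{n/p} < n/p, deg h_{n/q} < n/q, deg h'_{n/q} < n/q, such that f(x) = h_{n/p}(x)·G(n,n/p;x) + h_{n/q}(x)·G(n,n/q;x) = h'_{n/p}(x)·G(n,n/p;x) + h'_{n/q}(x)·G(n,n/q;x). Then there exists δ(x) ∈ ℚ[x] with deg δ(x) < n/(p·q) such that h'_{n/p}(x) = h_{n/p}(x) − δ(x)·G(n/p, n/(p·q); x) and h'_{n/q}(x) = h_{n/q}(x) + δ(x)·G(n/q, n/(p·q); x). -/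

import Mathlib

open Polynomial

noncomputable def Gpoly (R : Type*) [Semiring R] (n r : ℕ) : Polynomial R :=
  ∑ l ∈ Finset.range (n / r), X ^ (l * r)

lemma Gmul (n r : ℕ) (h : r ∣ n) : Gpoly ℚ n r * (X ^ r - 1) = X ^ n - 1 := by
  unfold Gpoly
  have h1 : ∑ l ∈ Finset.range (n / r), (X : ℚ[X]) ^ (l * r)
      = ∑ l ∈ Finset.range (n / r), ((X : ℚ[X]) ^ r) ^ l := by
    refine Finset.sum_congr rfl fun l _ => ?_
    rw [← pow_mul, mul_comm]
  rw [h1, geom_sum_mul, ← pow_mul, Nat.mul_div_cancel' h]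

lemma Gprod (m d : ℕ) (h : d ∣ m) (hd : 0 < d) (hm : 0 < m) :
    Gpoly ℚ m d = ∏ i ∈ m.divisors \ d.divisors, cyclotomic i ℚ := by
  have hsub : d.divisors ⊆ m.divisors := Nat.divisors_subset_of_dvd hm.ne' h
  have hne : ((X : ℚ[X]) ^ d - 1) ≠ 0 := by
    intro hc
    have := degree_X_pow_sub_C hd (1 : ℚ)
    rw [map_one, hc, degree_zero] at this
    exact absurd this (by simp [hd.ne'])
  apply mul_right_cancel₀ hne
  rw [Gmul m d h, ← prod_cyclotomic_eq_X_pow_sub_one hm,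
    ← prod_cyclotomic_eq_X_pow_sub_one hd, Finset.prod_sdiff hsub]

lemma Xpow_sub_one_ne (d : ℕ) (hd : 0 < d) : ((X : ℚ[X]) ^ d - 1) ≠ 0 := by
  intro hc
  have h1 := degree_X_pow_sub_C hd (1 : ℚ)
  rw [map_one, hc, degree_zero] at h1
  exact absurd h1 (by simp [hd.ne'])

theorem stmt_11 (p q e₁ e₂ n : ℕ) (hp : p.Prime) (hq : q.Prime) (hpq : p < q)
    (he₁ : 1 ≤ e₁) (he₂ : 1 ≤ e₂) (hn : n = p ^ e₁ * q ^ e₂)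
    (f : Polynomial ℚ) (hdeg : f.degree < (n : WithBot ℕ))
    (hdvd : cyclotomic n ℚ ∣ f)
    (hnp hnq hnp' hnq' : Polynomial ℚ)
    (hdnp : hnp.degree < ((n / p : ℕ) : WithBot ℕ))
    (hdnp' : hnp'.degree < ((n / p : ℕ) : WithBot ℕ))
    (hdnq : hnq.degree < ((n / q : ℕ) : WithBot ℕ))
    (hdnq' : hnq'.degree < ((n / q : ℕ) : WithBot ℕ))
    (hf : f = hnp * Gpoly ℚ n (n / p) + hnq * Gpoly ℚ n (n / q))
    (hf' : f = hnp' * Gpoly ℚ n (n / p) + hnq' * Gpoly ℚ n (n / q)) :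
    ∃ δ : Polynomial ℚ, δ.degree < ((n / (p * q) : ℕ) : WithBot ℕ) ∧
      hnp' = hnp - δ * Gpoly ℚ (n / p) (n / (p * q)) ∧
      hnq' = hnq + δ * Gpoly ℚ (n / q) (n / (p * q)) := by
  set d := n / (p * q) with hd_def
  have hnpos : 0 < n := by
    rw [hn]; exact Nat.mul_pos (pow_pos hp.pos _) (pow_pos hq.pos _)
  have hpqdvd : p * q ∣ n := by
    rw [hn]
    exact mul_dvd_mul (dvd_pow_self p (by omega)) (dvd_pow_self q (by omega))
  have hdn : d * (p * q) = n := Nat.div_mul_cancel hpqdvd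
  have hd : 0 < d := by
    rcases Nat.eq_zero_or_pos d with h0 | h0
    · rw [h0, zero_mul] at hdn; omega
    · exact h0
  have hppos := hp.pos
  have hqpos := hq.pos
  have hnp_eq : n / p = d * q := by
    rw [← hdn, show d * (p * q) = d * q * p by ring, Nat.mul_div_cancel _ hp.pos]
  have hnq_eq : n / q = d * p := by
    rw [← hdn, show d * (p * q) = d * p * q by ring, Nat.mul_div_cancel _ hq.pos]
  rw [hnp_eq] at hdnp hdnp' ⊢
  rw [hnq_eq] at hdnq hdnq' ⊢
  set A := Gpoly ℚ (d * q) d with hA_def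
  set B := Gpoly ℚ (d * p) d with hB_def
  set Gp := Gpoly ℚ n (n / p) with hGp_def
  set Gq := Gpoly ℚ n (n / q) with hGq_def
  set a := hnp - hnp' with ha_def
  set b := hnq' - hnq with hb_def
  have hdvdp : n / p ∣ n := ⟨p, by rw [hnp_eq, ← hdn]; ring⟩
  have hdvdq : n / q ∣ n := ⟨q, by rw [hnq_eq, ← hdn]; ring⟩
  have hdq : d ∣ d * q := dvd_mul_right d q
  have hdp : d ∣ d * p := dvd_mul_right d p
  have E0 : a * Gp = b * Gq := by
    rw [ha_def, hb_def]
    linear_combination hf' - hf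
  have hXn_ne := Xpow_sub_one_ne n hnpos
  have hXd_ne := Xpow_sub_one_ne d hd
  have E1 : a * (X ^ (n / q) - 1) = b * (X ^ (n / p) - 1) := by
    apply mul_right_cancel₀ hXn_ne
    calc a * (X ^ (n / q) - 1) * (X ^ n - 1)
        = (a * Gp) * ((X ^ (n / p) - 1) * (X ^ (n / q) - 1)) := by
          rw [show (X:ℚ[X]) ^ n - 1 = Gp * (X ^ (n/p) - 1) from (Gmul n (n/p) hdvdp).symm]; ring
      _ = (b * Gq) * ((X ^ (n / p) - 1) * (X ^ (n / q) - 1)) := by rw [E0]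
      _ = b * (X ^ (n / p) - 1) * (X ^ n - 1) := by
          rw [show (X:ℚ[X]) ^ n - 1 = Gq * (X ^ (n/q) - 1) from (Gmul n (n/q) hdvdq).symm]; ring
  have E2 : a * B = b * A := by
    apply mul_right_cancel₀ hXd_ne
    calc a * B * (X ^ d - 1) = a * (B * (X ^ d - 1)) := by ring
      _ = a * (X ^ (n / q) - 1) := by rw [hB_def, Gmul (d*p) d hdp, hnq_eq]
      _ = b * (X ^ (n / p) - 1) := E1
      _ = b * (A * (X ^ d - 1)) := by rw [hA_def, Gmul (d*q) d hdq, hnp_eq]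
      _ = b * A * (X ^ d - 1) := by ring
  have hApos : 0 < d * q := by positivity
  have hBpos : 0 < d * p := by positivity
  have hAprod : A = ∏ i ∈ (d*q).divisors \ d.divisors, cyclotomic i ℚ :=
    Gprod (d*q) d hdq hd hApos
  have hBprod : B = ∏ i ∈ (d*p).divisors \ d.divisors, cyclotomic i ℚ :=
    Gprod (d*p) d hdp hd hBpos
  have hcop : IsCoprime A B := by
    rw [hAprod, hBprod]
    apply IsCoprime.prod_left
    intro i hi
    apply IsCoprime.prod_right
    intro j hj
    apply cyclotomic.isCoprime_rat
    rintro rfl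
    rw [Finset.mem_sdiff, Nat.mem_divisors] at hi hj
    have hidq : i ∣ d * q := hi.1.1
    have hidp : i ∣ d * p := hj.1.1
    have hid : i ∣ d := by
      have h1 : i ∣ Nat.gcd (d * q) (d * p) := Nat.dvd_gcd hidq hidp
      rwa [Nat.gcd_mul_left, Nat.Coprime.gcd_eq_one, mul_one] at h1
      exact ((Nat.coprime_primes hq hp).mpr (by omega))
    exact hi.2 (Nat.mem_divisors.mpr ⟨hid, hd.ne'⟩)
  have hAne : A ≠ 0 := by
    intro h0
    apply Xpow_sub_one_ne (d*q) hApos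
    rw [← Gmul (d*q) d hdq, ← hA_def, h0, zero_mul]
  have hBne : B ≠ 0 := by
    intro h0
    apply Xpow_sub_one_ne (d*p) hBpos
    rw [← Gmul (d*p) d hdp, ← hB_def, h0, zero_mul]
  obtain ⟨δ, hδ⟩ : A ∣ a := hcop.dvd_of_dvd_mul_right ⟨b, by linear_combination E2⟩
  have hb : b = δ * B := by
    apply mul_left_cancel₀ hAne
    linear_combination B * hδ - E2
  refine ⟨δ, ?_, by linear_combination -hδ, by linear_combination hb⟩
  by_cases hδ0 : δ = 0
  · rw [hδ0, degree_zero]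
    exact bot_lt_iff_ne_bot.mpr (by simp)
  · have hadeg : a.degree < ((d * q : ℕ) : WithBot ℕ) :=
      lt_of_le_of_lt (degree_sub_le _ _) (max_lt hdnp hdnp')
    have hAdeg : A.degree + (d : WithBot ℕ) = ((d * q : ℕ) : WithBot ℕ) := by
      have h1 := congrArg degree (Gmul (d*q) d hdq)
      rw [degree_mul, show (1:ℚ[X]) = C 1 by rw [map_one],
        degree_X_pow_sub_C hd, degree_X_pow_sub_C hApos] at h1
      exact_mod_cast h1
    by_contra hcon
    push_neg at hcon
    have h2 : ((d * q : ℕ) : WithBot ℕ) ≤ a.degree := by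
      rw [hδ, degree_mul, ← hAdeg]
      exact add_le_add le_rfl hcon
    exact absurd (lt_of_le_of_lt h2 hadeg) (lt_irrefl _)
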